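/- For a c-regular one-dimensional set Ω̃_j = ⋃_{l=1}^{n} I_l (finitely many closed intervals of length ≥ c separated by gaps ≥ c), every function g ∈ H^m(Ω̃_j) admits an extension g^e ∈ H^m(ℝ) with ‖g^e‖_{L²(ℝ)} ≤ c₃‖g‖_{L²(Ω̃_j)} and ‖g^e‖_{H^m(ℝ)} ≤ c₄‖g‖_{H^m(Ω̃_j)}, where c₃, c₄ depend only on c and m (not on n or g). -/

import Mathlib

open MeasureTheory ENNReal


/-- A subset of `ℝ` is `c`-regular if it is a finite union of closed intervals,
each of length at least `c`, with consecutive gaps at least `c`. -/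
def CRegular1D (c : ℝ) (s : Set ℝ) : Prop :=
  ∃ (n : ℕ) (a b : Fin (n + 1) → ℝ),
    (∀ l, a l + c ≤ b l) ∧
    (∀ l : Fin n, b l.castSucc + c ≤ a l.succ) ∧
    s = ⋃ l, Set.Icc (a l) (b l)

/-- Sobolev `H^m` norm of `g : ℝ → ℝ` over `s`:
`(∑_{k ≤ m} ‖g^{(k)}‖²_{L²(s)})^{1/2}`. -/
noncomputable def HmN (m : ℕ) (s : Set ℝ) (g : ℝ → ℝ) : ℝ≥0∞ :=
  (∑ k ∈ Finset.range (m + 1),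
    (eLpNorm (iteratedDeriv k g) 2 (volume.restrict s)) ^ 2) ^ ((1 : ℝ) / 2)



open Set Filter Topology

namespace SobolevCRegAux

noncomputable section


/-- squared L² norm as a lower integral -/
def L2sq (f : ℝ → ℝ) (μ : Measure ℝ) : ℝ≥0∞ := ∫⁻ x, (‖f x‖₊ : ℝ≥0∞) ^ 2 ∂μ

lemma eLpNorm_two_eq (f : ℝ → ℝ) (μ : Measure ℝ) :
    eLpNorm f 2 μ = (L2sq f μ) ^ ((1:ℝ)/2) := by
  rw [eLpNorm_eq_lintegral_rpow_enorm_toReal (by norm_num) (by norm_num), L2sq]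
  congr 1
  refine lintegral_congr fun x => ?_
  rw [show ((2:ℝ≥0∞).toReal) = ((2:ℕ):ℝ) by norm_num, ENNReal.rpow_natCast, enorm_eq_nnnorm]

lemma sq_eLpNorm_two (f : ℝ → ℝ) (μ : Measure ℝ) :
    (eLpNorm f 2 μ) ^ 2 = L2sq f μ := by
  rw [eLpNorm_two_eq, ← ENNReal.rpow_natCast _ 2, ← ENNReal.rpow_mul]
  norm_num

/-- iterated derivative of the zero function -/
lemma iteratedDeriv_zero_fun (n : ℕ) : iteratedDeriv n (fun _ : ℝ => (0:ℝ)) = fun _ => 0 := by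
  induction n with
  | zero => simp [iteratedDeriv_zero]
  | succ n ih => rw [iteratedDeriv_succ, ih]; ext x; simp

lemma iteratedDeriv_eq_zero_of_eventually_zero {E : ℝ → ℝ} {x : ℝ} {k : ℕ}
    (h : E =ᶠ[𝓝 x] fun _ => 0) : iteratedDeriv k E x = 0 := by
  rw [h.iteratedDeriv_eq, iteratedDeriv_zero_fun]

/-- changing the defining set of iteratedDerivWithin near the point -/
lemma iteratedDerivWithin_congr_set' {f : ℝ → ℝ} {S T : Set ℝ} {x : ℝ} {n : ℕ}
    (h : S =ᶠ[𝓝 x] T) : iteratedDerivWithin n f S x = iteratedDerivWithin n f T x := by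
  simp only [iteratedDerivWithin_eq_iteratedFDerivWithin, iteratedFDerivWithin_congr_set h n]

lemma iteratedDerivWithin_of_isOpen' {f : ℝ → ℝ} {S : Set ℝ} {x : ℝ} {n : ℕ}
    (hS : IsOpen S) (hx : x ∈ S) : iteratedDerivWithin n f S x = iteratedDeriv n f x := by
  rw [iteratedDerivWithin_eq_iteratedFDerivWithin, iteratedDeriv_eq_iteratedFDeriv,
    iteratedFDerivWithin_of_isOpen n hS hx]

lemma Icc_eventuallyEq_univ {a b y : ℝ} (hy : y ∈ Ioo a b) :
    (Icc a b : Set ℝ) =ᶠ[𝓝 y] (univ : Set ℝ) := by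
  filter_upwards [Ioo_mem_nhds hy.1 hy.2] with z hz
  simp only [eq_iff_iff]
  constructor
  · intro _; trivial
  · intro _; exact ⟨le_of_lt hz.1, le_of_lt hz.2⟩

lemma iteratedDerivWithin_Icc_eq_iteratedDeriv {f : ℝ → ℝ} {a b y : ℝ} {n : ℕ}
    (hy : y ∈ Ioo a b) : iteratedDerivWithin n f (Icc a b) y = iteratedDeriv n f y := by
  rw [iteratedDerivWithin_congr_set' (Icc_eventuallyEq_univ hy), iteratedDerivWithin_univ]



/-- Lagrange weights: `∑ i, lam i * (-(i+1))^k = 1` for all `k ≤ m`. -/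
lemma exists_lagrange (m : ℕ) : ∃ lam : Fin (m+1) → ℝ,
    ∀ k : ℕ, k ≤ m → ∑ i : Fin (m+1), lam i * (-((i:ℕ)+1) : ℝ) ^ k = 1 := by
  set v : Fin (m+1) → ℝ := fun i => -((i:ℕ)+1)
  have hv : Function.Injective v := by
    intro i j h
    simp only [v, neg_inj] at h
    have : ((i:ℕ):ℝ) = ((j:ℕ):ℝ) := by linarith
    exact Fin.ext (by exact_mod_cast this)
  set M : Matrix (Fin (m+1)) (Fin (m+1)) ℝ := Matrix.vandermonde v
  have hdet : M.det ≠ 0 := by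
    rw [Matrix.det_vandermonde_ne_zero_iff]
    exact hv
  refine ⟨Matrix.vecMul (fun _ => 1) M⁻¹, ?_⟩
  intro k hk
  have h1 : Matrix.vecMul (Matrix.vecMul (fun _ => 1) M⁻¹) M = fun _ => (1:ℝ) := by
    rw [Matrix.vecMul_vecMul, Matrix.nonsing_inv_mul M (isUnit_iff_ne_zero.2 hdet), Matrix.vecMul_one]
  have := congrFun h1 ⟨k, Nat.lt_succ_of_le hk⟩
  rw [Matrix.vecMul] at this
  simpa [dotProduct, M, Matrix.vandermonde, v, mul_comm] using this

/-- Cauchy–Schwarz-ish: `(∑ f)^2 ≤ 2·#u·∑ f^2` in `ℝ≥0∞`. -/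
lemma sq_sum_le {ι : Type*} (u : Finset ι) (f : ι → ℝ≥0∞) :
    (∑ i ∈ u, f i) ^ 2 ≤ (2 * u.card : ℕ) * ∑ i ∈ u, f i ^ 2 := by
  have key : (∑ i ∈ u, f i) * (∑ j ∈ u, f j) ≤ ∑ i ∈ u, ∑ j ∈ u, (f i ^ 2 + f j ^ 2) := by
    rw [Finset.sum_mul_sum]
    refine Finset.sum_le_sum fun i _ => Finset.sum_le_sum fun j _ => ?_
    rcases le_total (f i) (f j) with h | h
    · calc f i * f j ≤ f j * f j := mul_le_mul_left h _
        _ ≤ f i ^ 2 + f j ^ 2 := by rw [← pow_two]; exact le_add_self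
    · calc f i * f j ≤ f i * f i := mul_le_mul_right h _
        _ ≤ f i ^ 2 + f j ^ 2 := by rw [← pow_two]; exact self_le_add_right _ _
  calc (∑ i ∈ u, f i) ^ 2 = (∑ i ∈ u, f i) * (∑ j ∈ u, f j) := by rw [pow_two]
    _ ≤ ∑ i ∈ u, ∑ j ∈ u, (f i ^ 2 + f j ^ 2) := key
    _ = (2 * u.card : ℕ) * ∑ i ∈ u, f i ^ 2 := by
        simp only [Finset.sum_add_distrib, Finset.sum_const, nsmul_eq_mul]
        rw [← Finset.mul_sum]
        push_cast
        ring

/-- affine change of variables in a set lintegral, upper bound form. -/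
lemma lintegral_comp_affine_le (h : ℝ → ℝ≥0∞) {r q : ℝ} (hr : r ≠ 0) {A B : Set ℝ}
    (hA : MeasurableSet A) (hB : MeasurableSet B)
    (him : ∀ x ∈ A, r * x + q ∈ B) :
    ∫⁻ x in A, h (r * x + q) ∂volume ≤ ENNReal.ofReal |r⁻¹| * ∫⁻ y in B, h y ∂volume := by
  set e : ℝ ≃ᵐ ℝ := (affineHomeomorph r q hr).toMeasurableEquiv with he
  have hee : ∀ x, e x = r * x + q := fun x => rfl
  have hmap : Measure.map e volume = ENNReal.ofReal |r⁻¹| • volume := by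
    have : (fun x : ℝ => r * x + q) = (fun y : ℝ => y + q) ∘ (fun x : ℝ => r * x) := rfl
    have hcoe : (e : ℝ → ℝ) = fun x : ℝ => r * x + q := rfl
    rw [show ⇑e = (fun y : ℝ => y + q) ∘ (fun x : ℝ => r * x) from rfl,
      ← Measure.map_map (measurable_add_const q) (measurable_const_mul r),
      Real.map_volume_mul_left hr, Measure.map_smul, map_add_right_eq_self]
  have himg : MeasurableSet (e '' A) := e.measurableEmbedding.measurableSet_image.2 hA
  calc ∫⁻ x in A, h (r * x + q) ∂volume
      = ∫⁻ x, A.indicator (fun x => h (e x)) x ∂volume := by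
        rw [lintegral_indicator hA]
        exact setLIntegral_congr_fun hA (fun x _ => by simp only [hee])
    _ = ∫⁻ x, (e '' A).indicator h (e x) ∂volume := by
        refine lintegral_congr fun x => ?_
        by_cases hx : x ∈ A
        · rw [Set.indicator_of_mem hx, Set.indicator_of_mem (Set.mem_image_of_mem e hx)]
        · rw [Set.indicator_of_notMem hx, Set.indicator_of_notMem]
          exact fun hc => hx (by rwa [← e.injective.mem_set_image])
    _ = ∫⁻ y, (e '' A).indicator h y ∂(Measure.map e volume) := (lintegral_map_equiv _ e).symm
    _ = ENNReal.ofReal |r⁻¹| * ∫⁻ y in e '' A, h y ∂volume := by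
        rw [hmap, lintegral_smul_measure, lintegral_indicator himg, smul_eq_mul]
    _ ≤ ENNReal.ofReal |r⁻¹| * ∫⁻ y in B, h y ∂volume := by
        gcongr
        rintro y ⟨x, hx, rfl⟩
        exact him x hx



/-- uniform bound for iterated derivatives of the smooth transition function -/
lemma transition_bound (m : ℕ) : ∃ M : ℝ, 1 ≤ M ∧
    ∀ j ≤ m, ∀ x : ℝ, |iteratedDeriv j Real.smoothTransition x| ≤ M := by
  have hT : ∀ n : ℕ, ContDiff ℝ n Real.smoothTransition := fun n => by
    have := Real.smoothTransition.contDiff (n := (n : ℕ∞))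
    exact_mod_cast this
  have hb : ∀ j : ℕ, ∃ Mj : ℝ, ∀ x : ℝ, |iteratedDeriv j Real.smoothTransition x| ≤ Mj := by
    intro j
    have hcont : Continuous (iteratedDeriv j Real.smoothTransition) :=
      (hT j).continuous_iteratedDeriv j (le_refl _)
    obtain ⟨Cj, hCj⟩ := (isCompact_Icc (a := (-1:ℝ)) (b := 2)).exists_bound_of_continuousOn
      hcont.continuousOn
    refine ⟨max Cj 1, fun x => ?_⟩
    rcases le_or_gt x (-1) with hx | hx
    · rcases Nat.eq_zero_or_pos j with rfl | hj
      · simp only [iteratedDeriv_zero]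
        rw [Real.smoothTransition.zero_of_nonpos (by linarith)]
        simp
      · have h0 : iteratedDeriv j Real.smoothTransition x = 0 := by
          apply iteratedDeriv_eq_zero_of_eventually_zero
          filter_upwards [Iio_mem_nhds (show x < 0 by linarith)] with z hz
          exact Real.smoothTransition.zero_of_nonpos (le_of_lt hz)
        rw [h0]; simp
    · rcases le_or_gt x 2 with hx2 | hx2
      · exact le_trans (by simpa using hCj x ⟨le_of_lt hx, hx2⟩) (le_max_left _ _)
      · rcases Nat.eq_zero_or_pos j with rfl | hj
        · simp only [iteratedDeriv_zero]
          rw [Real.smoothTransition.one_of_one_le (by linarith)]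
          simp
        · have h0 : iteratedDeriv j Real.smoothTransition x = 0 := by
            have : Real.smoothTransition =ᶠ[𝓝 x] fun _ => 1 := by
              filter_upwards [Ioi_mem_nhds (show (1:ℝ) < x by linarith)] with z hz
              exact Real.smoothTransition.one_of_one_le (le_of_lt hz)
            rw [this.iteratedDeriv_eq]
            rcases j with _ | j
            · omega
            · rw [iteratedDeriv_succ']
              have : deriv (fun _ : ℝ => (1:ℝ)) = fun _ => 0 := by ext z; simp
              rw [this, iteratedDeriv_zero_fun]
          rw [h0]; simp
  choose Mj hMj using hb
  refine ⟨max ((Finset.range (m+1)).sup' (by simp) Mj) 1, le_max_right _ _, fun j hj x => ?_⟩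
  refine le_trans (hMj j x) (le_trans ?_ (le_max_left _ _))
  exact Finset.le_sup' Mj (Finset.mem_range.2 (Nat.lt_succ_of_le hj))

/-- iterated derivative within a set of an affine precomposition -/
lemma iteratedDerivWithin_comp_affine {g : ℝ → ℝ} {T S : Set ℝ} (hT : UniqueDiffOn ℝ T)
    (hS : UniqueDiffOn ℝ S) {r q : ℝ}
    (hmaps : ∀ x ∈ S, r * x + q ∈ T) : ∀ {n : ℕ}, ContDiffOn ℝ n g T → ∀ {x : ℝ}, x ∈ S →
    iteratedDerivWithin n (fun y => g (r * y + q)) S x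
      = r ^ n * iteratedDerivWithin n g T (r * x + q) := by
  intro n
  induction n with
  | zero => intro hg x hx; simp [iteratedDerivWithin_zero]
  | succ n IH =>
    intro hg x hx
    have hgn : ContDiffOn ℝ n g T := hg.of_le (by exact_mod_cast Nat.cast_le.2 (Nat.le_succ n))
    have hEq : Set.EqOn (iteratedDerivWithin (n+1) (fun y => g (r * y + q)) S)
        (fun x => derivWithin (iteratedDerivWithin n (fun y => g (r * y + q)) S) S x) S :=
      fun y hy => by rw [iteratedDerivWithin_succ]
    rw [iteratedDerivWithin_succ]
    have hEq2 : Set.EqOn (iteratedDerivWithin n (fun y => g (r * y + q)) S)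
        (fun y => r ^ n * iteratedDerivWithin n g T (r * y + q)) S := fun y hy => IH hgn hy
    rw [derivWithin_congr hEq2 (hEq2 hx)]
    have hdiff : DifferentiableWithinAt ℝ (iteratedDerivWithin n g T) T (r * x + q) :=
      hg.differentiableOn_iteratedDerivWithin (by exact_mod_cast Nat.lt_succ_self n) hT
        _ (hmaps x hx)
    have hA : HasDerivWithinAt (fun y : ℝ => r * y + q) r S x := by
      simpa using (((hasDerivAt_id x).const_mul r).add_const q).hasDerivWithinAt
    have hcomp : HasDerivWithinAt (fun y => iteratedDerivWithin n g T (r * y + q))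
        (derivWithin (iteratedDerivWithin n g T) T (r * x + q) * r) S x :=
      by have := HasDerivWithinAt.comp x hdiff.hasDerivWithinAt hA hmaps; exact this
    rw [derivWithin_const_mul _ hcomp.differentiableWithinAt,
      hcomp.derivWithin (hS.uniqueDiffWithinAt hx),
      ← iteratedDerivWithin_succ]
    ring

/-- iterated derivative within a set of a finite sum -/
lemma iteratedDerivWithin_finsetsum {ι : Type*} {u : Finset ι} {f : ι → ℝ → ℝ} {n : ℕ}
    {S : Set ℝ} (hS : UniqueDiffOn ℝ S) {x : ℝ} (hx : x ∈ S)
    (hf : ∀ i ∈ u, ContDiffOn ℝ n (f i) S) :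
    iteratedDerivWithin n (fun y => ∑ i ∈ u, f i y) S x
      = ∑ i ∈ u, iteratedDerivWithin n (f i) S x := by
  classical
  induction u using Finset.induction with
  | empty =>
    simp only [Finset.sum_empty]
    have : iteratedDerivWithin n (fun _ : ℝ => (0:ℝ)) S x
        = iteratedDerivWithin n ((0:ℝ) • (fun _ : ℝ => (0:ℝ))) S x := by
      congr 1; ext y; simp
    rw [this, iteratedDerivWithin_const_smul hx hS _ contDiffWithinAt_const]
    simp
  | insert _ _ hnotmem IH =>
    rename_i i u'
    simp only [Finset.sum_insert hnotmem]
    have h1 : ContDiffOn ℝ n (f i) S := hf i (Finset.mem_insert_self i u')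
    have h2 : ContDiffOn ℝ n (fun y => ∑ j ∈ u', f j y) S := by
      apply ContDiffOn.sum
      intro j hj
      exact hf j (Finset.mem_insert_of_mem hj)
    have := iteratedDerivWithin_add hx hS (f := f i) (g := fun y => ∑ j ∈ u', f j y) (h1 x hx) (h2 x hx)
    simp only [Pi.add_def] at this
    rw [this, IH (fun j hj => hf j (Finset.mem_insert_of_mem hj))]



lemma natCast_succ_eq (m : ℕ) : ((m+1 : ℕ) : WithTop ℕ∞) = (m : WithTop ℕ∞) + 1 := by
  push_cast; rfl

/-- Gluing two `C^m` functions on adjacent closed intervals with matching one-sided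
derivatives up to order `m`. -/
lemma glue {u t v : ℝ} (hut : u < t) (htv : t < v) : ∀ {m : ℕ} {f₁ f₂ : ℝ → ℝ},
    ContDiffOn ℝ m f₁ (Icc u t) → ContDiffOn ℝ m f₂ (Icc t v) →
    (∀ k, k ≤ m → iteratedDerivWithin k f₁ (Icc u t) t = iteratedDerivWithin k f₂ (Icc t v) t) →
    ContDiffOn ℝ m (fun x => if x < t then f₁ x else f₂ x) (Icc u v) := by
  have htT : t ∈ Icc u t := ⟨hut.le, le_refl t⟩
  have htV : t ∈ Icc t v := ⟨le_refl t, htv.le⟩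
  have hUT : UniqueDiffOn ℝ (Icc u t) := uniqueDiffOn_Icc hut
  have hTV : UniqueDiffOn ℝ (Icc t v) := uniqueDiffOn_Icc htv
  have hUV : UniqueDiffOn ℝ (Icc u v) := uniqueDiffOn_Icc (hut.trans htv)
  intro m
  induction m with
  | zero =>
    intro f₁ f₂ h₁ h₂ hm
    have hval : f₁ t = f₂ t := by
      have := hm 0 le_rfl
      simpa [iteratedDerivWithin_zero] using this
    have eq₁ : EqOn (fun x => if x < t then f₁ x else f₂ x) f₁ (Icc u t) := by
      intro x hx
      rcases lt_or_eq_of_le hx.2 with h | h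
      · simp [h]
      · subst h; simp [lt_irrefl, hval]
    have eq₂ : EqOn (fun x => if x < t then f₁ x else f₂ x) f₂ (Icc t v) := by
      intro x hx
      simp [not_lt.2 hx.1]
    rw [show ((0:ℕ):WithTop ℕ∞) = 0 from rfl, contDiffOn_zero] at h₁ h₂ ⊢
    intro x hx
    have cwa₁ : ContinuousWithinAt (fun x => if x < t then f₁ x else f₂ x) (Icc u t) x := by
      by_cases hxt : x ∈ Icc u t
      · exact (h₁ x hxt).congr eq₁ (eq₁ hxt)
      · exact continuousWithinAt_of_notMem_closure (by rwa [isClosed_Icc.closure_eq])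
    have cwa₂ : ContinuousWithinAt (fun x => if x < t then f₁ x else f₂ x) (Icc t v) x := by
      by_cases hxt : x ∈ Icc t v
      · exact (h₂ x hxt).congr eq₂ (eq₂ hxt)
      · exact continuousWithinAt_of_notMem_closure (by rwa [isClosed_Icc.closure_eq])
    have := cwa₁.union cwa₂
    rwa [Icc_union_Icc_eq_Icc hut.le htv.le] at this
  | succ m IH =>
    intro f₁ f₂ h₁ h₂ hm
    have h₁' : ContDiffOn ℝ ((m : WithTop ℕ∞) + 1) f₁ (Icc u t) := by
      rw [← natCast_succ_eq]; exact h₁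
    have h₂' : ContDiffOn ℝ ((m : WithTop ℕ∞) + 1) f₂ (Icc t v) := by
      rw [← natCast_succ_eq]; exact h₂
    have hval : f₁ t = f₂ t := by
      have := hm 0 (Nat.zero_le _)
      simpa [iteratedDerivWithin_zero] using this
    have eq₁ : EqOn (fun x => if x < t then f₁ x else f₂ x) f₁ (Icc u t) := by
      intro x hx
      rcases lt_or_eq_of_le hx.2 with h | h
      · simp [h]
      · subst h; simp [lt_irrefl, hval]
    have eq₂ : EqOn (fun x => if x < t then f₁ x else f₂ x) f₂ (Icc t v) := by
      intro x hx
      simp [not_lt.2 hx.1]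
    have hdval : derivWithin f₁ (Icc u t) t = derivWithin f₂ (Icc t v) t := by
      have := hm 1 (Nat.succ_le_succ (Nat.zero_le m))
      rwa [iteratedDerivWithin_one,
        iteratedDerivWithin_one] at this
    have hd₁ : DifferentiableOn ℝ f₁ (Icc u t) :=
      h₁'.differentiableOn (by simp)
    have hd₂ : DifferentiableOn ℝ f₂ (Icc t v) :=
      h₂'.differentiableOn (by simp)
    set w : ℝ → ℝ := fun x =>
      if x < t then derivWithin f₁ (Icc u t) x else derivWithin f₂ (Icc t v) x with hw
    have key : ∀ x ∈ Icc u v,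
        HasDerivWithinAt (fun x => if x < t then f₁ x else f₂ x) (w x) (Icc u v) x := by
      intro x hx
      have HW1 : HasDerivWithinAt (fun x => if x < t then f₁ x else f₂ x) (w x) (Icc u t) x := by
        by_cases hxt : x ∈ Icc u t
        · have hwx : w x = derivWithin f₁ (Icc u t) x := by
            by_cases hlt : x < t
            · simp [hw, hlt]
            · have hxeq : x = t := le_antisymm hxt.2 (not_lt.1 hlt)
              subst hxeq
              simp [hw, lt_irrefl, hdval]
          rw [hwx]
          exact ((hd₁ x hxt).hasDerivWithinAt).congr eq₁ (eq₁ hxt)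
        · rw [hasDerivWithinAt_iff_hasFDerivWithinAt]
          exact HasFDerivWithinAt.of_notMem_closure (by rwa [isClosed_Icc.closure_eq])
      have HW2 : HasDerivWithinAt (fun x => if x < t then f₁ x else f₂ x) (w x) (Icc t v) x := by
        by_cases hxt : x ∈ Icc t v
        · have hwx : w x = derivWithin f₂ (Icc t v) x := by
            by_cases hlt : x < t
            · exact absurd (lt_of_lt_of_le hlt hxt.1) (lt_irrefl x)
            · simp [hw, hlt]
          rw [hwx]
          exact ((hd₂ x hxt).hasDerivWithinAt).congr eq₂ (eq₂ hxt)
        · rw [hasDerivWithinAt_iff_hasFDerivWithinAt]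
          exact HasFDerivWithinAt.of_notMem_closure (by rwa [isClosed_Icc.closure_eq])
      have := HW1.union HW2
      rwa [Icc_union_Icc_eq_Icc hut.le htv.le] at this
    rw [natCast_succ_eq, contDiffOn_succ_iff_derivWithin hUV]
    refine ⟨fun x hx => (key x hx).differentiableWithinAt, ?_, ?_⟩
    · intro habs
      exact absurd habs (by simp)
    · have hc₁ : ContDiffOn ℝ m (derivWithin f₁ (Icc u t)) (Icc u t) :=
        ((contDiffOn_succ_iff_derivWithin hUT).1 h₁').2.2
      have hc₂ : ContDiffOn ℝ m (derivWithin f₂ (Icc t v)) (Icc t v) :=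
        ((contDiffOn_succ_iff_derivWithin hTV).1 h₂').2.2
      have hmm : ∀ k, k ≤ m →
          iteratedDerivWithin k (derivWithin f₁ (Icc u t)) (Icc u t) t
            = iteratedDerivWithin k (derivWithin f₂ (Icc t v)) (Icc t v) t := by
        intro k hk
        rw [← iteratedDerivWithin_succ', ← iteratedDerivWithin_succ']
        exact hm (k+1) (Nat.succ_le_succ hk)
      have := IH hc₁ hc₂ hmm
      exact this.congr fun x hx => (key x hx).derivWithin (hUV.uniqueDiffWithinAt hx)

/-- pointwise bound for the `k`-th derivative of `ψ · (reflection sum)` on the flap `V`. -/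
lemma flap_pointwise (m : ℕ) (lam : Fin (m+1) → ℝ) (Λ : ℝ) (hΛ : ∀ i, |lam i| ≤ Λ)
    {g E : ℝ → ℝ} {a b : ℝ} (hab : a < b) (hg : ContDiffOn ℝ m g (Icc a b))
    {V : Set ℝ} (hV : IsOpen V)
    {p : ℝ}
    (hmaps : ∀ (i : Fin (m+1)), ∀ x ∈ V, (-(((i:ℕ):ℝ)+1)) * x + (((i:ℕ):ℝ)+2) * p ∈ Ioo a b)
    {ψ : ℝ → ℝ} (hψ : ContDiff ℝ (m : WithTop ℕ∞) ψ) (Mψ : ℝ)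
    (hMψ : ∀ j ≤ m, ∀ x, |iteratedDeriv j ψ x| ≤ Mψ)
    (hE : ∀ x ∈ V, E =ᶠ[𝓝 x]
      fun y => ψ y * (∑ i : Fin (m+1), lam i * g ((-(((i:ℕ):ℝ)+1)) * y + (((i:ℕ):ℝ)+2) * p)))
    {k : ℕ} (hk : k ≤ m) {x : ℝ} (hx : x ∈ V) :
    |iteratedDeriv k E x| ≤ (Mψ * Λ * ((m:ℝ)+1)^m * 2^m) *
      ∑ j ∈ Finset.range (k+1), ∑ i : Fin (m+1),
        |iteratedDeriv (k-j) g ((-(((i:ℕ):ℝ)+1)) * x + (((i:ℕ):ℝ)+2) * p)| := by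
  set r : Fin (m+1) → ℝ := fun i => -(((i:ℕ):ℝ)+1) with hr
  set q : Fin (m+1) → ℝ := fun i => (((i:ℕ):ℝ)+2) * p with hq
  set L : ℝ → ℝ := fun y => ∑ i : Fin (m+1), lam i * g (r i * y + q i) with hL
  have hMψ0 : 0 ≤ Mψ := le_trans (abs_nonneg _) (hMψ 0 (Nat.zero_le _) 0)
  have hΛ0 : 0 ≤ Λ := le_trans (abs_nonneg _) (hΛ 0)
  have hIcc : UniqueDiffOn ℝ (Icc a b) := uniqueDiffOn_Icc hab
  have hmapsIcc : ∀ i : Fin (m+1), ∀ y ∈ V, r i * y + q i ∈ Icc a b := fun i y hy =>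
    Ioo_subset_Icc_self (hmaps i y hy)
  have haff : ∀ i : Fin (m+1), ContDiff ℝ (m : WithTop ℕ∞) (fun y : ℝ => r i * y + q i) := by
    intro i
    have : ContDiff ℝ (m : WithTop ℕ∞) (fun y : ℝ => r i * y) := contDiff_id.const_smul (r i)
    exact this.add contDiff_const
  have hgi : ∀ i : Fin (m+1), ContDiffOn ℝ (m : WithTop ℕ∞) (fun y => g (r i * y + q i)) V := by
    intro i
    exact hg.comp ((haff i).contDiffOn) (fun y hy => hmapsIcc i y hy)
  have hLc : ContDiffOn ℝ (m : WithTop ℕ∞) L V := by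
    apply ContDiffOn.sum
    intro i _
    exact (contDiffOn_const.mul (hgi i))
  -- step 1 : replace E by ψ * L
  have step1 : iteratedDeriv k E x = iteratedDeriv k (fun y => ψ y * L y) x :=
    (hE x hx).iteratedDeriv_eq k
  -- derivatives of L
  have hLder : ∀ n : ℕ, n ≤ m → ∀ y ∈ V,
      iteratedDeriv n L y = ∑ i : Fin (m+1), lam i * (r i ^ n *
        iteratedDeriv n g (r i * y + q i)) := by
    intro n hn y hy
    have hcast : (n : WithTop ℕ∞) ≤ (m : WithTop ℕ∞) := by exact_mod_cast hn
    rw [← iteratedDerivWithin_of_isOpen' hV hy]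
    rw [iteratedDerivWithin_finsetsum hV.uniqueDiffOn hy
      (fun i _ => (contDiffOn_const.mul ((hgi i).of_le hcast)))]
    refine Finset.sum_congr rfl fun i _ => ?_
    rw [iteratedDerivWithin_const_mul hy hV.uniqueDiffOn _ (((hgi i).of_le hcast) y hy)]
    rw [iteratedDerivWithin_comp_affine hIcc hV.uniqueDiffOn (hmapsIcc i)
      (hg.of_le hcast) hy]
    rw [iteratedDerivWithin_Icc_eq_iteratedDeriv (hmaps i y hy)]
  -- bound on |D^n L|
  have hLbound : ∀ n : ℕ, n ≤ m → ∀ y ∈ V,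
      |iteratedDeriv n L y| ≤ Λ * ((m:ℝ)+1)^m *
        ∑ i : Fin (m+1), |iteratedDeriv n g (r i * y + q i)| := by
    intro n hn y hy
    rw [hLder n hn y hy]
    calc |∑ i : Fin (m+1), lam i * (r i ^ n * iteratedDeriv n g (r i * y + q i))|
        ≤ ∑ i : Fin (m+1), |lam i * (r i ^ n * iteratedDeriv n g (r i * y + q i))| :=
          Finset.abs_sum_le_sum_abs _ _
      _ ≤ ∑ i : Fin (m+1), Λ * ((m:ℝ)+1)^m * |iteratedDeriv n g (r i * y + q i)| := by
          refine Finset.sum_le_sum fun i _ => ?_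
          rw [abs_mul, abs_mul, abs_pow]
          have h1 : |lam i| ≤ Λ := hΛ i
          have h2 : |r i| ^ n ≤ ((m:ℝ)+1)^m := by
            have : |r i| = ((i:ℕ):ℝ) + 1 := by
              rw [hr]; rw [abs_neg, abs_of_nonneg (by positivity)]
            rw [this]
            have him : ((i:ℕ):ℝ) ≤ (m:ℝ) := by exact_mod_cast Nat.lt_succ_iff.1 i.2
            calc (((i:ℕ):ℝ) + 1) ^ n ≤ ((m:ℝ)+1) ^ n :=
                  pow_le_pow_left₀ (by positivity) (by linarith) n
              _ ≤ ((m:ℝ)+1) ^ m :=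
                  pow_le_pow_right₀ (by linarith [Nat.cast_nonneg (α:=ℝ) m]) hn
          have h3 : (0:ℝ) ≤ |iteratedDeriv n g (r i * y + q i)| := abs_nonneg _
          calc |lam i| * (|r i| ^ n * |iteratedDeriv n g (r i * y + q i)|)
              ≤ Λ * (((m:ℝ)+1)^m * |iteratedDeriv n g (r i * y + q i)|) := by
                apply mul_le_mul h1 _ (by positivity) hΛ0
                exact mul_le_mul_of_nonneg_right h2 h3
            _ = Λ * ((m:ℝ)+1)^m * |iteratedDeriv n g (r i * y + q i)| := by ring
      _ = Λ * ((m:ℝ)+1)^m * ∑ i : Fin (m+1), |iteratedDeriv n g (r i * y + q i)| := by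
          rw [Finset.mul_sum]
  -- Leibniz
  have leibniz : |iteratedDeriv k (fun y => ψ y * L y) x| ≤
      ∑ j ∈ Finset.range (k+1), (k.choose j : ℝ) * |iteratedDeriv j ψ x| *
        |iteratedDeriv (k-j) L x| := by
    have hmul := norm_iteratedFDerivWithin_mul_le (𝕜 := ℝ) (hψ.contDiffOn) hLc
      hV.uniqueDiffOn hx (n := k) (by exact_mod_cast hk)
    have conv : ∀ (f : ℝ → ℝ) (n : ℕ), ‖iteratedFDerivWithin ℝ n f V x‖ = |iteratedDeriv n f x| := by
      intro f n
      rw [iteratedFDerivWithin_of_isOpen n hV hx, norm_iteratedFDeriv_eq_norm_iteratedDeriv,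
        Real.norm_eq_abs]
    rw [conv] at hmul
    refine le_trans hmul (Finset.sum_le_sum fun j hj => ?_)
    rw [conv, conv]
  -- combine
  rw [step1]
  refine le_trans leibniz ?_
  have hchoose : ∀ j, (k.choose j : ℝ) ≤ 2^m := by
    intro j
    have h1 : k.choose j ≤ 2^k := by
      rcases le_or_gt j k with hjk | hjk
      · calc k.choose j ≤ ∑ l ∈ Finset.range (k+1), k.choose l :=
              Finset.single_le_sum (fun l _ => Nat.zero_le _) (Finset.mem_range.2 (Nat.lt_succ_of_le hjk))
          _ = 2^k := Nat.sum_range_choose k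
      · rw [Nat.choose_eq_zero_of_lt hjk]; exact Nat.zero_le _
    calc (k.choose j : ℝ) ≤ (2:ℝ)^k := by exact_mod_cast h1
      _ ≤ 2^m := by apply pow_le_pow_right₀ (by norm_num) hk
  calc ∑ j ∈ Finset.range (k+1), (k.choose j : ℝ) * |iteratedDeriv j ψ x| * |iteratedDeriv (k-j) L x|
      ≤ ∑ j ∈ Finset.range (k+1), (Mψ * Λ * ((m:ℝ)+1)^m * 2^m) *
          ∑ i : Fin (m+1), |iteratedDeriv (k-j) g (r i * x + q i)| := by
        refine Finset.sum_le_sum fun j hj => ?_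
        have hjk : j ≤ k := Nat.lt_succ_iff.1 (Finset.mem_range.1 hj)
        have hψj : |iteratedDeriv j ψ x| ≤ Mψ := hMψ j (hjk.trans hk) x
        have hLj := hLbound (k-j) (le_trans (Nat.sub_le k j) hk) x hx
        have hnn : (0:ℝ) ≤ ∑ i : Fin (m+1), |iteratedDeriv (k-j) g (r i * x + q i)| :=
          Finset.sum_nonneg fun i _ => abs_nonneg _
        calc (k.choose j : ℝ) * |iteratedDeriv j ψ x| * |iteratedDeriv (k-j) L x|
            ≤ 2^m * Mψ * (Λ * ((m:ℝ)+1)^m *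
                ∑ i : Fin (m+1), |iteratedDeriv (k-j) g (r i * x + q i)|) := by
              apply mul_le_mul _ hLj (abs_nonneg _) (by positivity)
              exact mul_le_mul (hchoose j) hψj (abs_nonneg _) (by positivity)
          _ = (Mψ * Λ * ((m:ℝ)+1)^m * 2^m) *
                ∑ i : Fin (m+1), |iteratedDeriv (k-j) g (r i * x + q i)| := by ring
    _ = (Mψ * Λ * ((m:ℝ)+1)^m * 2^m) * ∑ j ∈ Finset.range (k+1),
          ∑ i : Fin (m+1), |iteratedDeriv (k-j) g (r i * x + q i)| := by
        rw [Finset.mul_sum]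

/-- integrated flap estimate -/
lemma flap_estimate (m : ℕ) (lam : Fin (m+1) → ℝ) (Λ : ℝ) (hΛ : ∀ i, |lam i| ≤ Λ)
    {g E : ℝ → ℝ} {a b : ℝ} (hab : a < b) (hg : ContDiffOn ℝ m g (Icc a b))
    {V : Set ℝ} (hV : IsOpen V)
    {p : ℝ}
    (hmaps : ∀ (i : Fin (m+1)), ∀ x ∈ V, (-(((i:ℕ):ℝ)+1)) * x + (((i:ℕ):ℝ)+2) * p ∈ Ioo a b)
    {ψ : ℝ → ℝ} (hψ : ContDiff ℝ (m : WithTop ℕ∞) ψ) (Mψ : ℝ)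
    (hMψ : ∀ j ≤ m, ∀ x, |iteratedDeriv j ψ x| ≤ Mψ)
    (hE : ∀ x ∈ V, E =ᶠ[𝓝 x]
      fun y => ψ y * (∑ i : Fin (m+1), lam i * g ((-(((i:ℕ):ℝ)+1)) * y + (((i:ℕ):ℝ)+2) * p)))
    {k : ℕ} (hk : k ≤ m) :
    ∫⁻ x in V, (‖iteratedDeriv k E x‖₊ : ℝ≥0∞) ^ 2 ∂volume ≤
      (ENNReal.ofReal (Mψ * Λ * ((m:ℝ)+1)^m * 2^m))^2 * ((2*(m+1)) : ℕ) * ((2*(m+1)) : ℕ)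
        * ((m+1 : ℕ)) *
        ∑ j ∈ Finset.range (k+1),
          ∫⁻ y in Ioo a b, (‖iteratedDeriv j g y‖₊ : ℝ≥0∞) ^ 2 ∂volume := by
  have hVmeas : MeasurableSet V := hV.measurableSet
  set K : ℝ := Mψ * Λ * ((m:ℝ)+1)^m * 2^m with hKdef
  set r : Fin (m+1) → ℝ := fun i => -(((i:ℕ):ℝ)+1) with hr
  set q : Fin (m+1) → ℝ := fun i => (((i:ℕ):ℝ)+2) * p with hq
  -- pointwise bound in ℝ≥0∞
  have hpt : ∀ x ∈ V, (‖iteratedDeriv k E x‖₊ : ℝ≥0∞) ^ 2 ≤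
      (ENNReal.ofReal K)^2 * ((2*(k+1) : ℕ) * ((2*(m+1) : ℕ) *
        ∑ j ∈ Finset.range (k+1), ∑ i : Fin (m+1),
          (‖iteratedDeriv (k-j) g (r i * x + q i)‖₊ : ℝ≥0∞) ^ 2)) := by
    intro x hx
    have hreal := flap_pointwise m lam Λ hΛ hab hg hV hmaps hψ Mψ hMψ hE hk hx
    have hK0 : 0 ≤ K := by
      have h1 : 0 ≤ Mψ := le_trans (abs_nonneg _) (hMψ 0 (Nat.zero_le _) 0)
      have h2 : 0 ≤ Λ := le_trans (abs_nonneg _) (hΛ 0)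
      positivity
    have e1 : (‖iteratedDeriv k E x‖₊ : ℝ≥0∞) = ENNReal.ofReal |iteratedDeriv k E x| := by
      rw [← Real.enorm_eq_ofReal_abs]; rfl
    have e2 : ∀ (u : ℝ), (‖u‖₊ : ℝ≥0∞) = ENNReal.ofReal |u| := fun u =>
      Real.enorm_eq_ofReal_abs u
    rw [e1]
    have step : ENNReal.ofReal |iteratedDeriv k E x| ≤ ENNReal.ofReal K *
        ∑ j ∈ Finset.range (k+1), ∑ i : Fin (m+1),
          ENNReal.ofReal |iteratedDeriv (k-j) g (r i * x + q i)| := by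
      refine le_trans (ENNReal.ofReal_le_ofReal hreal) ?_
      rw [ENNReal.ofReal_mul hK0]
      gcongr
      rw [ENNReal.ofReal_sum_of_nonneg (fun j _ => Finset.sum_nonneg fun i _ => abs_nonneg _)]
      refine Finset.sum_le_sum fun j _ => ?_
      rw [ENNReal.ofReal_sum_of_nonneg (fun i _ => abs_nonneg _)]
    calc (ENNReal.ofReal |iteratedDeriv k E x|) ^ 2
        ≤ (ENNReal.ofReal K * ∑ j ∈ Finset.range (k+1), ∑ i : Fin (m+1),
            ENNReal.ofReal |iteratedDeriv (k-j) g (r i * x + q i)|) ^ 2 := by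
          exact pow_le_pow_left' step 2
      _ = (ENNReal.ofReal K)^2 * (∑ j ∈ Finset.range (k+1), ∑ i : Fin (m+1),
            ENNReal.ofReal |iteratedDeriv (k-j) g (r i * x + q i)|) ^ 2 := by
          rw [mul_pow]
      _ ≤ (ENNReal.ofReal K)^2 * ((2*(k+1) : ℕ) * ∑ j ∈ Finset.range (k+1),
            (∑ i : Fin (m+1), ENNReal.ofReal |iteratedDeriv (k-j) g (r i * x + q i)|) ^ 2) := by
          gcongr
          have := sq_sum_le (Finset.range (k+1))
            (fun j => ∑ i : Fin (m+1), ENNReal.ofReal |iteratedDeriv (k-j) g (r i * x + q i)|)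
          simpa using this
      _ ≤ (ENNReal.ofReal K)^2 * ((2*(k+1) : ℕ) * ((2*(m+1) : ℕ) *
            ∑ j ∈ Finset.range (k+1), ∑ i : Fin (m+1),
              (‖iteratedDeriv (k-j) g (r i * x + q i)‖₊ : ℝ≥0∞) ^ 2)) := by
          gcongr
          rw [Finset.mul_sum]
          refine Finset.sum_le_sum fun j _ => ?_
          have := sq_sum_le (Finset.univ : Finset (Fin (m+1)))
            (fun i => ENNReal.ofReal |iteratedDeriv (k-j) g (r i * x + q i)|)
          simp only [Finset.card_univ, Fintype.card_fin] at this
          refine le_trans this ?_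
          apply le_of_eq
          congr 1
          refine Finset.sum_congr rfl fun i _ => ?_
          rw [← e2]
  -- measurability of the comparison functions
  have hmeas : ∀ (j : ℕ) (i : Fin (m+1)), j ≤ k → AEMeasurable
      (fun x => (‖iteratedDeriv (k-j) g (r i * x + q i)‖₊ : ℝ≥0∞) ^ 2)
      (volume.restrict V) := by
    intro j i hj
    have hcont1 : ContinuousOn (iteratedDeriv (k-j) g) (Ioo a b) := by
      have h1 : ContinuousOn (iteratedDerivWithin (k-j) g (Icc a b)) (Icc a b) :=
        hg.continuousOn_iteratedDerivWithin (by exact_mod_cast le_trans (Nat.sub_le k j) hk)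
          (uniqueDiffOn_Icc hab)
      refine ContinuousOn.congr (h1.mono Ioo_subset_Icc_self) ?_
      intro y hy
      exact (iteratedDerivWithin_Icc_eq_iteratedDeriv hy).symm
    have hcont2 : ContinuousOn (fun x => iteratedDeriv (k-j) g (r i * x + q i)) V := by
      apply hcont1.comp (Continuous.continuousOn (by continuity))
      intro x hx
      exact hmaps i x hx
    exact ((hcont2.aemeasurable hVmeas).enorm).pow_const 2
  -- integrate
  calc ∫⁻ x in V, (‖iteratedDeriv k E x‖₊ : ℝ≥0∞) ^ 2 ∂volume
      ≤ ∫⁻ x in V, (ENNReal.ofReal K)^2 * ((2*(k+1) : ℕ) * ((2*(m+1) : ℕ) *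
          ∑ j ∈ Finset.range (k+1), ∑ i : Fin (m+1),
            (‖iteratedDeriv (k-j) g (r i * x + q i)‖₊ : ℝ≥0∞) ^ 2)) ∂volume :=
        setLIntegral_mono' hVmeas hpt
    _ = (ENNReal.ofReal K)^2 * ((2*(k+1) : ℕ) * ((2*(m+1) : ℕ) *
          ∑ j ∈ Finset.range (k+1), ∑ i : Fin (m+1),
            ∫⁻ x in V, (‖iteratedDeriv (k-j) g (r i * x + q i)‖₊ : ℝ≥0∞) ^ 2 ∂volume)) := by
        rw [lintegral_const_mul' _ _ (ENNReal.pow_ne_top ENNReal.ofReal_ne_top),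
          lintegral_const_mul' _ _ (ENNReal.natCast_ne_top _),
          lintegral_const_mul' _ _ (ENNReal.natCast_ne_top _)]
        congr 1; congr 1; congr 1
        rw [lintegral_finset_sum' _ (fun j hj => ?_)]
        · refine Finset.sum_congr rfl fun j hj => ?_
          exact lintegral_finset_sum' _ (fun i _ =>
            hmeas j i (Nat.lt_succ_iff.1 (Finset.mem_range.1 hj)))
        · exact Finset.aemeasurable_fun_sum _ fun i _ =>
            hmeas j i (Nat.lt_succ_iff.1 (Finset.mem_range.1 hj))
    _ ≤ (ENNReal.ofReal K)^2 * ((2*(k+1) : ℕ) * ((2*(m+1) : ℕ) *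
          ∑ j ∈ Finset.range (k+1), ∑ i : Fin (m+1),
            ∫⁻ y in Ioo a b, (‖iteratedDeriv (k-j) g y‖₊ : ℝ≥0∞) ^ 2 ∂volume)) := by
        refine mul_le_mul_right (mul_le_mul_right (mul_le_mul_right ?_ _) _) _
        refine Finset.sum_le_sum fun j hj => Finset.sum_le_sum fun i _ => ?_
        have hrne : r i ≠ 0 := by
          rw [hr]
          intro hcon
          have : (((i:ℕ):ℝ)+1) = 0 := by linarith [neg_eq_zero.1 hcon]
          have := Nat.cast_nonneg (α := ℝ) (i:ℕ)
          linarith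
        have := lintegral_comp_affine_le
          (fun y => (‖iteratedDeriv (k-j) g y‖₊ : ℝ≥0∞) ^ 2) hrne hVmeas measurableSet_Ioo
          (fun x hx => hmaps i x hx)
        refine le_trans this ?_
        have h1 : ENNReal.ofReal |(r i)⁻¹| ≤ 1 := by
          rw [ENNReal.ofReal_le_one]
          rw [abs_inv]
          rw [inv_le_one_iff₀]
          right
          rw [hr, abs_neg, abs_of_nonneg (by positivity)]
          linarith [Nat.cast_nonneg (α := ℝ) (i:ℕ)]
        calc ENNReal.ofReal |(r i)⁻¹| * ∫⁻ y in Ioo a b, (‖iteratedDeriv (k-j) g y‖₊ : ℝ≥0∞) ^ 2 ∂volume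
            ≤ 1 * ∫⁻ y in Ioo a b, (‖iteratedDeriv (k-j) g y‖₊ : ℝ≥0∞) ^ 2 ∂volume := by gcongr
          _ = _ := one_mul _
    _ = (ENNReal.ofReal K)^2 * ((2*(k+1) : ℕ) * ((2*(m+1) : ℕ) * ((m+1 : ℕ) *
          ∑ j ∈ Finset.range (k+1),
            ∫⁻ y in Ioo a b, (‖iteratedDeriv j g y‖₊ : ℝ≥0∞) ^ 2 ∂volume))) := by
        congr 1; congr 1; congr 1
        rw [← Finset.sum_range_reflect (fun j =>
          ∫⁻ y in Ioo a b, (‖iteratedDeriv j g y‖₊ : ℝ≥0∞) ^ 2 ∂volume) (k+1)]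
        simp only [Nat.add_sub_cancel]
        rw [Finset.mul_sum]
        refine Finset.sum_congr rfl fun j hj => ?_
        rw [Finset.sum_const, Finset.card_univ, Fintype.card_fin, nsmul_eq_mul]
    _ ≤ _ := by
        have hc : ((2*(k+1):ℕ) : ℝ≥0∞) ≤ ((2*(m+1):ℕ) : ℝ≥0∞) := by
          exact_mod_cast Nat.cast_le.2 (by omega : 2*(k+1) ≤ 2*(m+1))
        have hstep : (ENNReal.ofReal K)^2 * ((2*(k+1):ℕ) * ((2*(m+1):ℕ) * ((m+1:ℕ) *
              ∑ j ∈ Finset.range (k+1),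
                ∫⁻ y in Ioo a b, (‖iteratedDeriv j g y‖₊ : ℝ≥0∞) ^ 2 ∂volume)))
            ≤ (ENNReal.ofReal K)^2 * ((2*(m+1):ℕ) * ((2*(m+1):ℕ) * ((m+1:ℕ) *
              ∑ j ∈ Finset.range (k+1),
                ∫⁻ y in Ioo a b, (‖iteratedDeriv j g y‖₊ : ℝ≥0∞) ^ 2 ∂volume))) := by
          gcongr
        refine le_trans hstep (le_of_eq ?_)
        ring

set_option maxHeartbeats 2000000 in
/-- single-interval extension with uniform constants -/
lemma core (c : ℝ) (hc : 0 < c) (m : ℕ) :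
    ∃ C : ℝ≥0∞, 1 ≤ C ∧ C < ⊤ ∧ ∃ δ : ℝ, 0 < δ ∧ 2 * δ < c ∧
      ∀ a b : ℝ, a + c ≤ b → ∀ g : ℝ → ℝ, ContDiffOn ℝ m g (Icc a b) →
        ∃ E : ℝ → ℝ, ContDiff ℝ (m : WithTop ℕ∞) E ∧ EqOn E g (Icc a b) ∧
          (∀ x, x ∉ Icc (a - δ) (b + δ) → E x = 0) ∧
          ∀ k, k ≤ m → L2sq (iteratedDeriv k E) volume ≤
            C * ∑ j ∈ Finset.range (k + 1), L2sq (iteratedDeriv j g) (volume.restrict (Ioo a b)) := by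
  obtain ⟨lam, hlam⟩ := exists_lagrange m
  obtain ⟨M, hM1, hM⟩ := transition_bound m
  set T := Real.smoothTransition with hT
  set δ : ℝ := c / (4 * (m + 1)) with hδ
  have hmp : (0:ℝ) < m + 1 := by positivity
  have hδ0 : 0 < δ := by positivity
  have hδc4 : δ * (m+1) = c / 4 := by rw [hδ, div_mul_eq_mul_div, div_eq_div_iff (by positivity) (by norm_num)]; ring
  have h2δc : 2 * δ < c := by
    nlinarith [hδc4, hδ0, hmp, hc]
  set Λ : ℝ := ∑ i : Fin (m+1), |lam i| with hΛdef
  have hΛ : ∀ i, |lam i| ≤ Λ := fun i =>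
    Finset.single_le_sum (fun i _ => abs_nonneg (lam i)) (Finset.mem_univ i)
  set Mψ : ℝ := M * (max 1 δ⁻¹) ^ m with hMψdef
  -- derivative bound for affine rescalings of the transition function
  have ψbound : ∀ (e u : ℝ), |e| = δ⁻¹ → ∀ j, j ≤ m → ∀ x : ℝ,
      |iteratedDeriv j (fun y => T (e * y + u)) x| ≤ Mψ := by
    intro e u he j hj x
    have hTc : ∀ n : ℕ, ContDiff ℝ n (fun z : ℝ => T (z + u)) := by
      intro n
      have h1 : ContDiff ℝ (n:ℕ∞) T := Real.smoothTransition.contDiff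
      have h2 : ContDiff ℝ (n:ℕ∞) (fun z : ℝ => z + u) := contDiff_id.add contDiff_const
      exact h1.comp h2
    have hrw : (fun y : ℝ => T (e * y + u)) = fun y => (fun z => T (z + u)) (e * y) := by
      ext y; ring_nf
    rw [hrw, iteratedDeriv_comp_const_mul (hTc j) e]
    rw [iteratedDeriv_comp_add_const]
    rw [abs_mul, abs_pow, he]
    calc (δ⁻¹) ^ j * |iteratedDeriv j T (e * x + u)|
        ≤ (max 1 δ⁻¹) ^ m * M := by
          apply mul_le_mul _ (hM j hj _) (abs_nonneg _) (by positivity)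
          calc (δ⁻¹) ^ j ≤ (max 1 δ⁻¹) ^ j :=
              pow_le_pow_left₀ (by positivity) (le_max_right 1 δ⁻¹) j
            _ ≤ (max 1 δ⁻¹) ^ m := pow_le_pow_right₀ (le_max_left 1 δ⁻¹) hj
      _ = Mψ := by rw [hMψdef]; ring
  set Cflap : ℝ≥0∞ := (ENNReal.ofReal (Mψ * Λ * ((m:ℝ)+1)^m * 2^m))^2 * ((2*(m+1)) : ℕ)
    * ((2*(m+1)) : ℕ) * ((m+1 : ℕ)) with hCflap
  have hCfin : Cflap < ⊤ := by
    rw [hCflap]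
    refine ENNReal.mul_lt_top (ENNReal.mul_lt_top (ENNReal.mul_lt_top ?_ ?_) ?_) ?_
    · exact ENNReal.pow_lt_top ENNReal.ofReal_lt_top
    · exact ENNReal.natCast_lt_top _
    · exact ENNReal.natCast_lt_top _
    · exact ENNReal.natCast_lt_top _
  refine ⟨2 * Cflap + 1, le_add_self, ?_, δ, hδ0, h2δc, ?_⟩
  · have : (2:ℝ≥0∞) * Cflap < ⊤ := ENNReal.mul_lt_top (by norm_num) hCfin
    exact ENNReal.add_lt_top.2 ⟨this, by norm_num⟩
  intro a b hcab g hg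
  have hab : a < b := by linarith
  have hIcc : UniqueDiffOn ℝ (Icc a b) := uniqueDiffOn_Icc hab
  have h2δm : 2 * δ * (m+1) ≤ b - a := by nlinarith [hδc4, hc]
  -- the reflection maps
  set r : Fin (m+1) → ℝ := fun i => -(((i:ℕ):ℝ)+1) with hr
  have hi1 : ∀ i : Fin (m+1), (1:ℝ) ≤ ((i:ℕ):ℝ) + 1 := fun i => by
    linarith [Nat.cast_nonneg (α := ℝ) (i:ℕ)]
  have him1 : ∀ i : Fin (m+1), ((i:ℕ):ℝ) + 1 ≤ (m:ℝ) + 1 := fun i => by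
    have : ((i:ℕ):ℝ) ≤ (m:ℝ) := by exact_mod_cast Nat.lt_succ_iff.1 i.2
    linarith
  set L : ℝ → ℝ := fun y => ∑ i : Fin (m+1), lam i * g (r i * y + (((i:ℕ):ℝ)+2) * a) with hLdef
  set R : ℝ → ℝ := fun y => ∑ i : Fin (m+1), lam i * g (r i * y + (((i:ℕ):ℝ)+2) * b) with hRdef
  set G : ℝ → ℝ := fun x => if x < b then g x else R x with hGdef
  set F : ℝ → ℝ := fun x => if x < a then L x else G x with hFdef
  set ψ₁ : ℝ → ℝ := fun y => T (δ⁻¹ * y + (δ - a) * δ⁻¹) with hψ₁def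
  set ψ₂ : ℝ → ℝ := fun y => T (-δ⁻¹ * y + (b + δ) * δ⁻¹) with hψ₂def
  set E : ℝ → ℝ := fun x => (ψ₁ x * ψ₂ x) * F x with hEdef
  -- values of the cutoffs
  have hψ₁one : ∀ x : ℝ, a ≤ x → ψ₁ x = 1 := by
    intro x hx
    apply Real.smoothTransition.one_of_one_le
    have e : δ⁻¹ * x + (δ - a) * δ⁻¹ = (x - a + δ) / δ := by field_simp; ring
    rw [e, le_div_iff₀ hδ0]
    linarith
  have hψ₁zero : ∀ x : ℝ, x ≤ a - δ → ψ₁ x = 0 := by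
    intro x hx
    apply Real.smoothTransition.zero_of_nonpos
    have e : δ⁻¹ * x + (δ - a) * δ⁻¹ = (x - a + δ) / δ := by field_simp; ring
    rw [e]
    apply div_nonpos_of_nonpos_of_nonneg _ hδ0.le
    linarith
  have hψ₂one : ∀ x : ℝ, x ≤ b → ψ₂ x = 1 := by
    intro x hx
    apply Real.smoothTransition.one_of_one_le
    have e : -δ⁻¹ * x + (b + δ) * δ⁻¹ = (b + δ - x) / δ := by field_simp; ring
    rw [e, le_div_iff₀ hδ0]
    linarith
  have hψ₂zero : ∀ x : ℝ, b + δ ≤ x → ψ₂ x = 0 := by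
    intro x hx
    apply Real.smoothTransition.zero_of_nonpos
    have e : -δ⁻¹ * x + (b + δ) * δ⁻¹ = (b + δ - x) / δ := by field_simp; ring
    rw [e]
    apply div_nonpos_of_nonpos_of_nonneg _ hδ0.le
    linarith
  have hlam0 : ∑ i : Fin (m+1), lam i = 1 := by
    have := hlam 0 (Nat.zero_le m)
    simpa using this
  have hRb : R b = g b := by
    rw [hRdef]
    have e : ∀ i : Fin (m+1), r i * b + (((i:ℕ):ℝ)+2) * b = b := by
      intro i; rw [hr]; ring
    calc ∑ i : Fin (m+1), lam i * g (r i * b + (((i:ℕ):ℝ)+2) * b)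
        = ∑ i : Fin (m+1), lam i * g b := by
          refine Finset.sum_congr rfl fun i _ => ?_
          rw [e i]
      _ = (∑ i : Fin (m+1), lam i) * g b := by rw [Finset.sum_mul]
      _ = g b := by rw [hlam0, one_mul]
  have hGeq : EqOn G g (Icc a b) := by
    intro x hx
    by_cases hxb : x < b
    · simp [hGdef, hxb]
    · have : x = b := le_antisymm hx.2 (not_lt.1 hxb)
      subst this
      simp [hGdef, hRb]
  -- smoothness of the pieces
  have haff : ∀ (i : Fin (m+1)) (p : ℝ),
      ContDiff ℝ (m : WithTop ℕ∞) (fun y : ℝ => r i * y + (((i:ℕ):ℝ)+2) * p) := by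
    intro i p
    have h1 : ContDiff ℝ (m : WithTop ℕ∞) (fun y : ℝ => r i * y) := contDiff_id.const_smul (r i)
    exact h1.add contDiff_const
  have hmapsL : ∀ i : Fin (m+1), ∀ x ∈ Icc (a - 2*δ) a,
      r i * x + (((i:ℕ):ℝ)+2) * a ∈ Icc a b := by
    intro i x hx
    have e : r i * x + (((i:ℕ):ℝ)+2) * a = a + (((i:ℕ):ℝ)+1) * (a - x) := by rw [hr]; ring
    rw [e]
    have h1 : 0 ≤ (((i:ℕ):ℝ)+1) * (a - x) :=
      mul_nonneg (by linarith [hi1 i]) (by linarith [hx.2])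
    have h2 : (((i:ℕ):ℝ)+1) * (a - x) ≤ ((m:ℝ)+1) * (2*δ) := by
      apply mul_le_mul (him1 i) (by linarith [hx.1]) (by linarith [hx.2]) (by linarith [hmp])
    constructor
    · linarith
    · nlinarith [h2δm]
  have hmapsR : ∀ i : Fin (m+1), ∀ x ∈ Icc b (b + 2*δ),
      r i * x + (((i:ℕ):ℝ)+2) * b ∈ Icc a b := by
    intro i x hx
    have e : r i * x + (((i:ℕ):ℝ)+2) * b = b - (((i:ℕ):ℝ)+1) * (x - b) := by rw [hr]; ring
    rw [e]
    have h1 : 0 ≤ (((i:ℕ):ℝ)+1) * (x - b) :=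
      mul_nonneg (by linarith [hi1 i]) (by linarith [hx.1])
    have h2 : (((i:ℕ):ℝ)+1) * (x - b) ≤ ((m:ℝ)+1) * (2*δ) := by
      apply mul_le_mul (him1 i) (by linarith [hx.2]) (by linarith [hx.1]) (by linarith [hmp])
    constructor
    · nlinarith [h2δm]
    · linarith
  have hLc : ContDiffOn ℝ m L (Icc (a - 2*δ) a) := by
    apply ContDiffOn.sum
    intro i _
    exact contDiffOn_const.mul (hg.comp (haff i a).contDiffOn (fun x hx => hmapsL i x hx))
  have hRc : ContDiffOn ℝ m R (Icc b (b + 2*δ)) := by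
    apply ContDiffOn.sum
    intro i _
    exact contDiffOn_const.mul (hg.comp (haff i b).contDiffOn (fun x hx => hmapsR i x hx))
  have hbb2 : b < b + 2*δ := by linarith
  have haa2 : a - 2*δ < a := by linarith
  -- reflected sums reproduce all derivatives at the endpoint
  have reflexive_calc : ∀ (p : ℝ) (S : Set ℝ) (hS : UniqueDiffOn ℝ S) (hpS : p ∈ S)
      (hmaps : ∀ i : Fin (m+1), ∀ x ∈ S, r i * x + (((i:ℕ):ℝ)+2) * p ∈ Icc a b)
      (k : ℕ), k ≤ m →
      iteratedDerivWithin k (fun y => ∑ i : Fin (m+1), lam i * g (r i * y + (((i:ℕ):ℝ)+2)*p)) S p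
        = iteratedDerivWithin k g (Icc a b) p := by
    intro p S hS hpS hmaps k hk
    have hcast : (k : WithTop ℕ∞) ≤ (m : WithTop ℕ∞) := by exact_mod_cast hk
    have hgi : ∀ i : Fin (m+1),
        ContDiffOn ℝ k (fun y => g (r i * y + (((i:ℕ):ℝ)+2)*p)) S := by
      intro i
      exact (hg.of_le hcast).comp ((haff i p).of_le hcast).contDiffOn
        (fun x hx => hmaps i x hx)
    rw [iteratedDerivWithin_finsetsum hS hpS
      (fun i _ => contDiffOn_const.mul (hgi i))]
    have hpt : ∀ i : Fin (m+1), r i * p + (((i:ℕ):ℝ)+2) * p = p := by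
      intro i; rw [hr]; ring
    calc ∑ i : Fin (m+1),
          iteratedDerivWithin k (fun y => lam i * g (r i * y + (((i:ℕ):ℝ)+2)*p)) S p
        = ∑ i : Fin (m+1), lam i * (r i ^ k * iteratedDerivWithin k g (Icc a b) p) := by
          refine Finset.sum_congr rfl fun i _ => ?_
          rw [iteratedDerivWithin_const_mul hpS hS _ ((hgi i) p hpS),
            iteratedDerivWithin_comp_affine hIcc hS (hmaps i) (hg.of_le hcast) hpS, hpt i]
      _ = (∑ i : Fin (m+1), lam i * r i ^ k) * iteratedDerivWithin k g (Icc a b) p := by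
          rw [Finset.sum_mul]
          refine Finset.sum_congr rfl fun i _ => ?_
          ring
      _ = iteratedDerivWithin k g (Icc a b) p := by
          rw [hr]
          rw [hlam k hk, one_mul]
  have matchb : ∀ k, k ≤ m → iteratedDerivWithin k g (Icc a b) b
      = iteratedDerivWithin k R (Icc b (b + 2*δ)) b := by
    intro k hk
    rw [hRdef]
    exact (reflexive_calc b (Icc b (b+2*δ)) (uniqueDiffOn_Icc hbb2) ⟨le_refl b, by linarith⟩
      hmapsR k hk).symm
  have hGc : ContDiffOn ℝ m G (Icc a (b + 2*δ)) := glue hab hbb2 hg hRc matchb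
  have hseteq : (Icc a (b + 2*δ) : Set ℝ) =ᶠ[𝓝 a] (Icc a b : Set ℝ) := by
    have hmem : Iio b ∈ 𝓝 a := Iio_mem_nhds hab
    filter_upwards [hmem] with z hz
    change (z ∈ Icc a (b + 2*δ)) = (z ∈ Icc a b)
    simp only [eq_iff_iff, Set.mem_Icc]
    constructor
    · rintro ⟨h1, h2⟩
      have hz' : z < b := hz
      exact ⟨h1, le_of_lt hz'⟩
    · rintro ⟨h1, h2⟩
      have hz' : z < b := hz
      exact ⟨h1, by linarith⟩
  have matcha : ∀ k, k ≤ m → iteratedDerivWithin k L (Icc (a - 2*δ) a) a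
      = iteratedDerivWithin k G (Icc a (b + 2*δ)) a := by
    intro k hk
    have h1 : iteratedDerivWithin k L (Icc (a - 2*δ) a) a
        = iteratedDerivWithin k g (Icc a b) a := by
      rw [hLdef]
      exact reflexive_calc a (Icc (a-2*δ) a) (uniqueDiffOn_Icc haa2) ⟨by linarith, le_refl a⟩
        hmapsL k hk
    have h2 : iteratedDerivWithin k G (Icc a (b + 2*δ)) a
        = iteratedDerivWithin k G (Icc a b) a := iteratedDerivWithin_congr_set' hseteq
    have h3 : iteratedDerivWithin k G (Icc a b) a = iteratedDerivWithin k g (Icc a b) a :=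
      iteratedDerivWithin_congr hGeq ⟨le_refl a, hab.le⟩
    rw [h1, h2, h3]
  have hFc : ContDiffOn ℝ m F (Icc (a - 2*δ) (b + 2*δ)) :=
    glue haa2 (by linarith : a < b + 2*δ) hLc hGc matcha
  -- cutoff smooth
  have hψ₁c : ContDiff ℝ (m : WithTop ℕ∞) ψ₁ := by
    have h1 : ContDiff ℝ (m:ℕ∞) T := Real.smoothTransition.contDiff
    have h2 : ContDiff ℝ (m:ℕ∞) (fun y : ℝ => δ⁻¹ * y + (δ - a) * δ⁻¹) :=
      (contDiff_id.const_smul (δ⁻¹ : ℝ)).add contDiff_const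
    exact h1.comp h2
  have hψ₂c : ContDiff ℝ (m : WithTop ℕ∞) ψ₂ := by
    have h1 : ContDiff ℝ (m:ℕ∞) T := Real.smoothTransition.contDiff
    have h2 : ContDiff ℝ (m:ℕ∞) (fun y : ℝ => -δ⁻¹ * y + (b + δ) * δ⁻¹) :=
      (contDiff_id.const_smul (-δ⁻¹ : ℝ)).add contDiff_const
    exact h1.comp h2
  -- support
  have hEzero : ∀ x, x ∉ Icc (a - δ) (b + δ) → E x = 0 := by
    intro x hx
    rw [Set.mem_Icc, not_and_or] at hx
    rcases hx with hx | hx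
    · show (ψ₁ x * ψ₂ x) * F x = 0
      rw [hψ₁zero x (by push_neg at hx; linarith)]
      ring
    · show (ψ₁ x * ψ₂ x) * F x = 0
      rw [hψ₂zero x (by push_neg at hx; linarith)]
      ring
  -- global smoothness
  have hEc : ContDiff ℝ (m : WithTop ℕ∞) E := by
    rw [contDiff_iff_contDiffAt]
    intro x
    by_cases hx : x ∈ Ioo (a - 2*δ) (b + 2*δ)
    · have h1 : ContDiffOn ℝ (m : WithTop ℕ∞) E (Ioo (a - 2*δ) (b + 2*δ)) :=
        ((hψ₁c.mul hψ₂c).contDiffOn).mul (hFc.mono Ioo_subset_Icc_self)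
      exact h1.contDiffAt (isOpen_Ioo.mem_nhds hx)
    · have hZ : x ∈ (Icc (a - δ) (b + δ))ᶜ := by
        intro hcon
        apply hx
        rcases hcon with ⟨h1, h2⟩
        exact ⟨by linarith, by linarith⟩
      have : E =ᶠ[𝓝 x] fun _ => 0 := by
        filter_upwards [isClosed_Icc.isOpen_compl.mem_nhds hZ] with y hy
        exact hEzero y hy
      exact (contDiffAt_const (c := (0:ℝ))).congr_of_eventuallyEq this
  -- extension property
  have hEeq : EqOn E g (Icc a b) := by
    intro x hx
    show (ψ₁ x * ψ₂ x) * F x = g x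
    rw [hψ₁one x hx.1, hψ₂one x hx.2]
    have hF : F x = g x := by
      rw [hFdef]
      have : ¬ x < a := not_lt.2 hx.1
      simp only [this, if_false]
      exact hGeq hx
    rw [hF]; ring
  refine ⟨E, hEc, hEeq, hEzero, ?_⟩
  intro k hk
  -- eventual identities on the flaps and the middle
  have hV1 : ∀ x ∈ Ioo (a - δ) a, E =ᶠ[𝓝 x] fun y => ψ₁ y *
      (∑ i : Fin (m+1), lam i * g (r i * y + (((i:ℕ):ℝ)+2) * a)) := by
    intro x hx
    filter_upwards [Iio_mem_nhds hx.2] with y hy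
    have hy' : y < a := hy
    show (ψ₁ y * ψ₂ y) * F y = ψ₁ y * L y
    rw [hψ₂one y (by linarith)]
    have : F y = L y := by simp only [hFdef, if_pos hy']
    rw [this]
    ring
  have hV2 : ∀ x ∈ Ioo b (b + δ), E =ᶠ[𝓝 x] fun y => ψ₂ y *
      (∑ i : Fin (m+1), lam i * g (r i * y + (((i:ℕ):ℝ)+2) * b)) := by
    intro x hx
    filter_upwards [Ioi_mem_nhds hx.1] with y hy
    have hy' : b < y := hy
    show (ψ₁ y * ψ₂ y) * F y = ψ₂ y * R y
    rw [hψ₁one y (by linarith)]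
    have h1 : F y = G y := by simp only [hFdef, if_neg (not_lt.2 (by linarith : a ≤ y))]
    have h2 : G y = R y := by simp only [hGdef, if_neg (not_lt.2 (by linarith : b ≤ y))]
    rw [h1, h2]
    ring
  have hMid : ∀ x ∈ Ioo a b, iteratedDeriv k E x = iteratedDeriv k g x := by
    intro x hx
    apply Filter.EventuallyEq.iteratedDeriv_eq
    filter_upwards [Ioo_mem_nhds hx.1 hx.2] with y hy
    show (ψ₁ y * ψ₂ y) * F y = g y
    rw [hψ₁one y hy.1.le, hψ₂one y hy.2.le]
    have h1 : F y = G y := by simp only [hFdef, if_neg (not_lt.2 hy.1.le)]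
    have h2 : G y = g y := by simp only [hGdef, if_pos hy.2]
    rw [h1, h2]
    ring
  -- flap estimates
  have habs1 : |δ⁻¹| = δ⁻¹ := abs_of_pos (by positivity)
  have habs2 : |(-δ⁻¹ : ℝ)| = δ⁻¹ := by rw [abs_neg]; exact habs1
  have hMψ1 : ∀ j ≤ m, ∀ x, |iteratedDeriv j ψ₁ x| ≤ Mψ := fun j hj x =>
    ψbound δ⁻¹ ((δ - a) * δ⁻¹) habs1 j hj x
  have hMψ2 : ∀ j ≤ m, ∀ x, |iteratedDeriv j ψ₂ x| ≤ Mψ := fun j hj x =>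
    ψbound (-δ⁻¹) ((b + δ) * δ⁻¹) habs2 j hj x
  have hmaps1 : ∀ i : Fin (m+1), ∀ x ∈ Ioo (a - δ) a,
      (-(((i:ℕ):ℝ)+1)) * x + (((i:ℕ):ℝ)+2) * a ∈ Ioo a b := by
    intro i x hx
    have e : (-(((i:ℕ):ℝ)+1)) * x + (((i:ℕ):ℝ)+2) * a = a + (((i:ℕ):ℝ)+1) * (a - x) := by ring
    rw [e]
    have h1 : 0 < (((i:ℕ):ℝ)+1) * (a - x) :=
      mul_pos (by linarith [hi1 i]) (by linarith [hx.2])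
    have h2 : (((i:ℕ):ℝ)+1) * (a - x) < ((m:ℝ)+1) * δ := by
      have ha1 : a - x < δ := by linarith [hx.1]
      have ha0 : 0 < a - x := by linarith [hx.2]
      calc (((i:ℕ):ℝ)+1) * (a - x) ≤ ((m:ℝ)+1) * (a - x) :=
            mul_le_mul_of_nonneg_right (him1 i) ha0.le
        _ < ((m:ℝ)+1) * δ := by
            apply mul_lt_mul_of_pos_left ha1 hmp
    constructor
    · linarith
    · have h3 : ((m:ℝ)+1) * δ = c / 4 := by rw [mul_comm]; exact hδc4
      nlinarith [hc]
  have hmaps2 : ∀ i : Fin (m+1), ∀ x ∈ Ioo b (b + δ),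
      (-(((i:ℕ):ℝ)+1)) * x + (((i:ℕ):ℝ)+2) * b ∈ Ioo a b := by
    intro i x hx
    have e : (-(((i:ℕ):ℝ)+1)) * x + (((i:ℕ):ℝ)+2) * b = b - (((i:ℕ):ℝ)+1) * (x - b) := by ring
    rw [e]
    have h1 : 0 < (((i:ℕ):ℝ)+1) * (x - b) :=
      mul_pos (by linarith [hi1 i]) (by linarith [hx.1])
    have h2 : (((i:ℕ):ℝ)+1) * (x - b) < ((m:ℝ)+1) * δ := by
      have ha1 : x - b < δ := by linarith [hx.2]
      have ha0 : 0 < x - b := by linarith [hx.1]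
      calc (((i:ℕ):ℝ)+1) * (x - b) ≤ ((m:ℝ)+1) * (x - b) :=
            mul_le_mul_of_nonneg_right (him1 i) ha0.le
        _ < ((m:ℝ)+1) * δ := mul_lt_mul_of_pos_left ha1 hmp
    constructor
    · have h3 : ((m:ℝ)+1) * δ = c / 4 := by rw [mul_comm]; exact hδc4
      nlinarith [hc]
    · linarith
  have flap1 := flap_estimate m lam Λ hΛ hab hg (isOpen_Ioo (a := a - δ) (b := a))
    hmaps1 hψ₁c Mψ hMψ1 hV1 hk
  have flap2 := flap_estimate m lam Λ hΛ hab hg (isOpen_Ioo (a := b) (b := b + δ))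
    hmaps2 hψ₂c Mψ hMψ2 hV2 hk
  rw [← hCflap] at flap1 flap2
  -- five-region decomposition
  set Z : Set ℝ := (Icc (a - δ) (b + δ))ᶜ with hZdef
  set P : Set ℝ := ({a - δ, a, b, b + δ} : Set ℝ) with hPdef
  have cover : (univ : Set ℝ) ⊆ ((((Z ∪ P) ∪ Ioo (a - δ) a) ∪ Ioo a b) ∪ Ioo b (b + δ)) := by
    intro x _
    simp only [Set.mem_union]
    by_cases h : x ∈ Icc (a - δ) (b + δ)
    · rcases lt_trichotomy x a with hxa | hxa | hxa
      · rcases eq_or_lt_of_le h.1 with h1 | h1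
        · exact Or.inl (Or.inl (Or.inl (Or.inr (by rw [hPdef]; simp [← h1]))))
        · exact Or.inl (Or.inl (Or.inr ⟨h1, hxa⟩))
      · exact Or.inl (Or.inl (Or.inl (Or.inr (by rw [hPdef]; simp [hxa]))))
      · rcases lt_trichotomy x b with hxb | hxb | hxb
        · exact Or.inl (Or.inr ⟨hxa, hxb⟩)
        · exact Or.inl (Or.inl (Or.inl (Or.inr (by rw [hPdef]; simp [hxb]))))
        · rcases eq_or_lt_of_le h.2 with h1 | h1
          · exact Or.inl (Or.inl (Or.inl (Or.inr (by rw [hPdef]; simp [h1]))))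
          · exact Or.inr ⟨hxb, h1⟩
    · exact Or.inl (Or.inl (Or.inl (Or.inl h)))
  have hZzero : ∫⁻ x in Z, (‖iteratedDeriv k E x‖₊ : ℝ≥0∞) ^ 2 ∂volume = 0 := by
    have hmeasZ : MeasurableSet Z := isClosed_Icc.measurableSet.compl
    have hzz : ∀ x ∈ Z, (‖iteratedDeriv k E x‖₊ : ℝ≥0∞) ^ 2 = 0 := by
      intro x hx
      have hd : iteratedDeriv k E x = 0 := by
        apply iteratedDeriv_eq_zero_of_eventually_zero
        filter_upwards [isClosed_Icc.isOpen_compl.mem_nhds hx] with y hy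
        exact hEzero y hy
      rw [hd]; simp
    calc ∫⁻ x in Z, (‖iteratedDeriv k E x‖₊ : ℝ≥0∞) ^ 2 ∂volume
        = ∫⁻ _ in Z, (0:ℝ≥0∞) ∂volume :=
          setLIntegral_congr_fun hmeasZ hzz
      _ = 0 := by simp
  have hPzero : ∫⁻ x in P, (‖iteratedDeriv k E x‖₊ : ℝ≥0∞) ^ 2 ∂volume = 0 := by
    have hfin : P.Finite := by
      rw [hPdef]
      exact ((((Set.finite_singleton _).insert _).insert _).insert _)
    have h0 : volume P = 0 := hfin.measure_zero volume
    rw [Measure.restrict_eq_zero.2 h0]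
    simp
  have hMidle : ∫⁻ x in Ioo a b, (‖iteratedDeriv k E x‖₊ : ℝ≥0∞) ^ 2 ∂volume
      ≤ ∑ j ∈ Finset.range (k+1), L2sq (iteratedDeriv j g) (volume.restrict (Ioo a b)) := by
    have h1 : ∫⁻ x in Ioo a b, (‖iteratedDeriv k E x‖₊ : ℝ≥0∞) ^ 2 ∂volume
        = ∫⁻ x in Ioo a b, (‖iteratedDeriv k g x‖₊ : ℝ≥0∞) ^ 2 ∂volume := by
      refine setLIntegral_congr_fun measurableSet_Ioo (fun x hx => ?_)
      rw [hMid x hx]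
    rw [h1]
    exact Finset.single_le_sum (f := fun j => L2sq (iteratedDeriv j g) (volume.restrict (Ioo a b)))
      (fun j _ => zero_le) (Finset.mem_range.2 (Nat.lt_succ_self k))
  have hsplit : L2sq (iteratedDeriv k E) volume ≤
      (∫⁻ x in Z, (‖iteratedDeriv k E x‖₊ : ℝ≥0∞) ^ 2 ∂volume)
      + (∫⁻ x in P, (‖iteratedDeriv k E x‖₊ : ℝ≥0∞) ^ 2 ∂volume)
      + (∫⁻ x in Ioo (a - δ) a, (‖iteratedDeriv k E x‖₊ : ℝ≥0∞) ^ 2 ∂volume)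
      + (∫⁻ x in Ioo a b, (‖iteratedDeriv k E x‖₊ : ℝ≥0∞) ^ 2 ∂volume)
      + (∫⁻ x in Ioo b (b + δ), (‖iteratedDeriv k E x‖₊ : ℝ≥0∞) ^ 2 ∂volume) := by
    have h0 : L2sq (iteratedDeriv k E) volume =
        ∫⁻ x in univ, (‖iteratedDeriv k E x‖₊ : ℝ≥0∞) ^ 2 ∂volume := by
      rw [L2sq, setLIntegral_univ]
    rw [h0]
    refine le_trans (lintegral_mono_set cover) ?_
    refine le_trans (lintegral_union_le _ _ _) ?_
    refine add_le_add_left ?_ _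
    refine le_trans (lintegral_union_le _ _ _) ?_
    refine add_le_add_left ?_ _
    refine le_trans (lintegral_union_le _ _ _) ?_
    refine add_le_add_left ?_ _
    exact lintegral_union_le _ _ _
  refine le_trans hsplit ?_
  rw [hZzero, hPzero]
  simp only [zero_add]
  calc (∫⁻ x in Ioo (a - δ) a, (‖iteratedDeriv k E x‖₊ : ℝ≥0∞) ^ 2 ∂volume)
      + (∫⁻ x in Ioo a b, (‖iteratedDeriv k E x‖₊ : ℝ≥0∞) ^ 2 ∂volume)
      + (∫⁻ x in Ioo b (b + δ), (‖iteratedDeriv k E x‖₊ : ℝ≥0∞) ^ 2 ∂volume)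
      ≤ (Cflap * ∑ j ∈ Finset.range (k+1), L2sq (iteratedDeriv j g) (volume.restrict (Ioo a b)))
      + (∑ j ∈ Finset.range (k+1), L2sq (iteratedDeriv j g) (volume.restrict (Ioo a b)))
      + (Cflap * ∑ j ∈ Finset.range (k+1), L2sq (iteratedDeriv j g) (volume.restrict (Ioo a b))) :=
        add_le_add (add_le_add flap1 hMidle) flap2
    _ = (2 * Cflap + 1) * ∑ j ∈ Finset.range (k+1),
          L2sq (iteratedDeriv j g) (volume.restrict (Ioo a b)) := by ring

lemma iteratedDeriv_finsetsum {ι : Type*} {u : Finset ι} {f : ι → ℝ → ℝ} {n : ℕ}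
    (hf : ∀ i ∈ u, ContDiff ℝ (n : WithTop ℕ∞) (f i)) (x : ℝ) :
    iteratedDeriv n (fun y => ∑ i ∈ u, f i y) x = ∑ i ∈ u, iteratedDeriv n (f i) x := by
  simp only [← iteratedDerivWithin_univ]
  exact iteratedDerivWithin_finsetsum uniqueDiffOn_univ (mem_univ x)
    (fun i hi => (hf i hi).contDiffOn)

end

end SobolevCRegAux

open SobolevCRegAux Set Filter Topology

set_option maxHeartbeats 1000000 in
/-- Sobolev extension on `c`-regular one-dimensional sets: there are constants
`c₃, c₄ > 0` depending only on `c` and `m` such that every `m`-times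
continuously differentiable `g` with finite `H^m` norm on a `c`-regular set `s`
admits an extension `gᵉ` to all of `ℝ` agreeing with `g` on `s` and satisfying
`‖gᵉ‖_{L²(ℝ)} ≤ c₃ ‖g‖_{L²(s)}` and `‖gᵉ‖_{H^m(ℝ)} ≤ c₄ ‖g‖_{H^m(s)}`. -/
theorem sobolev_extension_cregular (c : ℝ) (hc : 0 < c) (m : ℕ) (hm : 1 ≤ m) :
    ∃ c₃ c₄ : ℝ≥0∞, 0 < c₃ ∧ c₃ < ⊤ ∧ 0 < c₄ ∧ c₄ < ⊤ ∧
      ∀ (s : Set ℝ) (g : ℝ → ℝ), CRegular1D c s → ContDiffOn ℝ m g s →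
        HmN m s g < ⊤ →
        ∃ ge : ℝ → ℝ, ContDiff ℝ m ge ∧ Set.EqOn ge g s ∧
          eLpNorm ge 2 volume ≤ c₃ * eLpNorm g 2 (volume.restrict s) ∧
          HmN m Set.univ ge ≤ c₄ * HmN m s g := by
  obtain ⟨C, hC1, hCfin, δ, hδ0, h2δc, hcore⟩ := core c hc m
  have hCne : C ≠ ⊤ := hCfin.ne
  have hc3pos : (0:ℝ≥0∞) < C ^ ((1:ℝ)/2) := by
    have h1 : (1:ℝ≥0∞) = (1:ℝ≥0∞) ^ ((1:ℝ)/2) := by rw [ENNReal.one_rpow]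
    calc (0:ℝ≥0∞) < 1 := zero_lt_one
      _ = (1:ℝ≥0∞) ^ ((1:ℝ)/2) := h1
      _ ≤ C ^ ((1:ℝ)/2) := ENNReal.rpow_le_rpow hC1 (by norm_num)
  have hc3fin : C ^ ((1:ℝ)/2) < ⊤ := ENNReal.rpow_lt_top_of_nonneg (by norm_num) hCne
  have hCm : C * ((m:ℝ≥0∞) + 1) ≠ ⊤ := by
    have h1 : ((m:ℝ≥0∞) + 1) < ⊤ :=
      ENNReal.add_lt_top.2 ⟨ENNReal.natCast_lt_top m, by norm_num⟩
    exact (ENNReal.mul_lt_top hCfin h1).ne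
  have hCm1 : (1:ℝ≥0∞) ≤ C * ((m:ℝ≥0∞) + 1) := by
    calc (1:ℝ≥0∞) = 1 * 1 := by norm_num
      _ ≤ C * ((m:ℝ≥0∞) + 1) := mul_le_mul' hC1 (le_add_self)
  have hc4pos : (0:ℝ≥0∞) < (C * ((m:ℝ≥0∞) + 1)) ^ ((1:ℝ)/2) := by
    calc (0:ℝ≥0∞) < 1 := zero_lt_one
      _ = (1:ℝ≥0∞) ^ ((1:ℝ)/2) := by rw [ENNReal.one_rpow]
      _ ≤ _ := ENNReal.rpow_le_rpow hCm1 (by norm_num)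
  have hc4fin : (C * ((m:ℝ≥0∞) + 1)) ^ ((1:ℝ)/2) < ⊤ :=
    ENNReal.rpow_lt_top_of_nonneg (by norm_num) hCm
  refine ⟨C ^ ((1:ℝ)/2), (C * ((m:ℝ≥0∞) + 1)) ^ ((1:ℝ)/2), hc3pos, hc3fin, hc4pos, hc4fin, ?_⟩
  rintro s g ⟨n, A, B, hlen, hgap, rfl⟩ hgs _
  -- interval ordering
  have habl : ∀ l, A l < B l := fun l => by linarith [hlen l]
  have chainP : ∀ d : ℕ, ∀ l l' : Fin (n+1), (l':ℕ) = (l:ℕ) + d + 1 → B l + c ≤ A l' := by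
    intro d
    induction d with
    | zero =>
      intro l l' h
      have hln : (l:ℕ) < n := by omega
      set i : Fin n := ⟨(l:ℕ), hln⟩ with hi
      have h1 : i.castSucc = l := by
        apply Fin.ext; simp [hi]
      have h2 : i.succ = l' := by
        apply Fin.ext; simp [hi]; omega
      have := hgap i
      rwa [h1, h2] at this
    | succ d IH =>
      intro l l'' h
      have hmid : (l:ℕ) + d + 1 < n + 1 := by omega
      set l' : Fin (n+1) := ⟨(l:ℕ) + d + 1, hmid⟩ with hl'
      have hIH : B l + c ≤ A l' := IH l l' (by simp [hl'])
      have hstep : B l' + c ≤ A l'' := by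
        have hln : (l':ℕ) < n := by simp [hl']; omega
        set i : Fin n := ⟨(l':ℕ), hln⟩ with hi
        have h1 : i.castSucc = l' := by apply Fin.ext; simp [hi]
        have h2 : i.succ = l'' := by apply Fin.ext; simp [hi, hl']; omega
        have := hgap i
        rwa [h1, h2] at this
      have := hlen l'
      linarith
  have chain : ∀ l l' : Fin (n+1), l < l' → B l + c ≤ A l' := by
    intro l l' hll'
    have h1 : (l:ℕ) < (l':ℕ) := hll'
    exact chainP ((l':ℕ) - (l:ℕ) - 1) l l' (by omega)
  -- extensions on each interval
  have hsub : ∀ l, Icc (A l) (B l) ⊆ ⋃ l', Icc (A l') (B l') := fun l =>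
    subset_iUnion (fun l' => Icc (A l') (B l')) l
  have hgl : ∀ l, ContDiffOn ℝ m g (Icc (A l) (B l)) := fun l => hgs.mono (hsub l)
  choose E hEc hEeq hEzero hEbnd using fun l : Fin (n+1) =>
    hcore (A l) (B l) (hlen l) g (hgl l)
  set ge : ℝ → ℝ := fun x => ∑ l : Fin (n+1), E l x with hgedef
  -- enlarged supports are disjoint
  have hsep : ∀ l l' : Fin (n+1), l ≠ l' → ∀ x,
      x ∈ Icc (A l - δ) (B l + δ) → x ∉ Icc (A l' - δ) (B l' + δ) := by
    intro l l' hne x hx hx'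
    rcases lt_or_gt_of_ne hne with h | h
    · have := chain l l' h
      have h1 := hx.2
      have h2 := hx'.1
      linarith
    · have := chain l' l h
      have h1 := hx.1
      have h2 := hx'.2
      linarith
  have hDzero : ∀ (l : Fin (n+1)) (k : ℕ) (x : ℝ), x ∉ Icc (A l - δ) (B l + δ) →
      iteratedDeriv k (E l) x = 0 := by
    intro l k x hx
    apply iteratedDeriv_eq_zero_of_eventually_zero
    filter_upwards [isClosed_Icc.isOpen_compl.mem_nhds hx] with y hy
    exact hEzero l y hy
  -- ge is smooth
  have hgec : ContDiff ℝ (m : WithTop ℕ∞) ge := by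
    rw [hgedef]
    apply ContDiff.sum
    intro l _
    exact hEc l
  -- ge extends g
  have hgeeq : EqOn ge g (⋃ l, Icc (A l) (B l)) := by
    intro x hx
    obtain ⟨l₀, hl₀⟩ : ∃ l₀, x ∈ Icc (A l₀) (B l₀) := by
      simpa using hx
    have henl : x ∈ Icc (A l₀ - δ) (B l₀ + δ) :=
      ⟨by linarith [hl₀.1], by linarith [hl₀.2]⟩
    have : ge x = E l₀ x := by
      rw [hgedef]
      apply Finset.sum_eq_single l₀
      · intro l _ hne
        have : x ∉ Icc (A l - δ) (B l + δ) := fun hcon => hsep l l₀ hne x hcon henl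
        have h0 := hDzero l 0 x this
        simpa using h0
      · intro habs
        exact absurd (Finset.mem_univ l₀) habs
    rw [this]
    exact hEeq l₀ hl₀
  -- key L² estimate for each order k ≤ m
  have hkey : ∀ k, k ≤ m → L2sq (iteratedDeriv k ge) volume ≤
      C * ∑ j ∈ Finset.range (k+1),
        L2sq (iteratedDeriv j g) (volume.restrict (⋃ l, Icc (A l) (B l))) := by
    intro k hk
    have hcast : (k : WithTop ℕ∞) ≤ (m : WithTop ℕ∞) := by exact_mod_cast hk
    have hsum : ∀ x, iteratedDeriv k ge x = ∑ l : Fin (n+1), iteratedDeriv k (E l) x := by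
      intro x
      rw [hgedef]
      exact iteratedDeriv_finsetsum (fun l _ => (hEc l).of_le hcast) x
    have hptsq : ∀ x, (‖iteratedDeriv k ge x‖₊ : ℝ≥0∞) ^ 2
        = ∑ l : Fin (n+1), (‖iteratedDeriv k (E l) x‖₊ : ℝ≥0∞) ^ 2 := by
      intro x
      rw [hsum x]
      by_cases hx : ∃ l₀, x ∈ Icc (A l₀ - δ) (B l₀ + δ)
      · obtain ⟨l₀, hl₀⟩ := hx
        have hvanish : ∀ l, l ≠ l₀ → iteratedDeriv k (E l) x = 0 := by
          intro l hne
          exact hDzero l k x (fun hcon => hsep l l₀ hne x hcon hl₀)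
        have h1 : ∑ l : Fin (n+1), iteratedDeriv k (E l) x = iteratedDeriv k (E l₀) x :=
          Finset.sum_eq_single l₀ (fun l _ h => hvanish l h)
            (fun h => absurd (Finset.mem_univ l₀) h)
        have h2 : ∑ l : Fin (n+1), (‖iteratedDeriv k (E l) x‖₊ : ℝ≥0∞) ^ 2
            = (‖iteratedDeriv k (E l₀) x‖₊ : ℝ≥0∞) ^ 2 :=
          Finset.sum_eq_single l₀ (fun l _ h => by rw [hvanish l h]; simp)
            (fun h => absurd (Finset.mem_univ l₀) h)
        rw [h1, h2]
      · push_neg at hx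
        have hvanish : ∀ l : Fin (n+1), iteratedDeriv k (E l) x = 0 := fun l =>
          hDzero l k x (hx l)
        simp [hvanish]
    have hmeasl : ∀ l : Fin (n+1), Measurable
        (fun x => (‖iteratedDeriv k (E l) x‖₊ : ℝ≥0∞) ^ 2) := by
      intro l
      have hcont : Continuous (iteratedDeriv k (E l)) :=
        (hEc l).continuous_iteratedDeriv k hcast
      exact (hcont.measurable.nnnorm.coe_nnreal_ennreal).pow_const 2
    calc L2sq (iteratedDeriv k ge) volume
        = ∫⁻ x, ∑ l : Fin (n+1), (‖iteratedDeriv k (E l) x‖₊ : ℝ≥0∞) ^ 2 ∂volume := by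
          rw [L2sq]
          exact lintegral_congr fun x => hptsq x
      _ = ∑ l : Fin (n+1), L2sq (iteratedDeriv k (E l)) volume := by
          rw [lintegral_finset_sum _ (fun l _ => hmeasl l)]
          rfl
      _ ≤ ∑ l : Fin (n+1), C * ∑ j ∈ Finset.range (k+1),
            L2sq (iteratedDeriv j g) (volume.restrict (Ioo (A l) (B l))) :=
          Finset.sum_le_sum fun l _ => hEbnd l k hk
      _ = C * ∑ j ∈ Finset.range (k+1), ∑ l : Fin (n+1),
            L2sq (iteratedDeriv j g) (volume.restrict (Ioo (A l) (B l))) := by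
          rw [← Finset.mul_sum, Finset.sum_comm]
      _ ≤ C * ∑ j ∈ Finset.range (k+1),
            L2sq (iteratedDeriv j g) (volume.restrict (⋃ l, Icc (A l) (B l))) := by
          apply mul_le_mul_right
          refine Finset.sum_le_sum fun j _ => ?_
          -- the open intervals are pairwise disjoint inside the union
          have hdisj : Pairwise (Function.onFun Disjoint fun l : Fin (n+1) => Ioo (A l) (B l)) := by
            intro l l' hne
            rw [Function.onFun]
            apply Set.disjoint_left.2
            intro x hx hx'
            rcases lt_or_gt_of_ne hne with h | h
            · have := chain l l' h
              have h1 := hx.2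
              have h2 := hx'.1
              linarith
            · have := chain l' l h
              have h1 := hx.1
              have h2 := hx'.2
              linarith
          have hrmeas : ∀ l : Fin (n+1), MeasurableSet (Ioo (A l) (B l)) := fun l =>
            measurableSet_Ioo
          have hrestr : volume.restrict (⋃ l, Ioo (A l) (B l))
              = Measure.sum (fun l : Fin (n+1) => volume.restrict (Ioo (A l) (B l))) :=
            Measure.restrict_iUnion hdisj hrmeas
          have h1 : ∑ l : Fin (n+1), L2sq (iteratedDeriv j g) (volume.restrict (Ioo (A l) (B l)))
              = L2sq (iteratedDeriv j g) (volume.restrict (⋃ l, Ioo (A l) (B l))) := by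
            rw [L2sq, hrestr, lintegral_sum_measure, tsum_fintype]
            rfl
          rw [h1]
          apply lintegral_mono'
          · apply Measure.restrict_mono _ le_rfl
            exact iUnion_mono fun l => Ioo_subset_Icc_self
          · exact le_refl _
    -- end hkey
  refine ⟨ge, hgec, hgeeq, ?_, ?_⟩
  · -- L² bound
    rw [eLpNorm_two_eq ge volume, eLpNorm_two_eq g _]
    have h0 : L2sq ge volume ≤ C * L2sq g (volume.restrict (⋃ l, Icc (A l) (B l))) := by
      have := hkey 0 (Nat.zero_le m)
      simpa [iteratedDeriv_zero] using this
    calc (L2sq ge volume) ^ ((1:ℝ)/2)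
        ≤ (C * L2sq g (volume.restrict (⋃ l, Icc (A l) (B l)))) ^ ((1:ℝ)/2) :=
          ENNReal.rpow_le_rpow h0 (by norm_num)
      _ = C ^ ((1:ℝ)/2) * (L2sq g (volume.restrict (⋃ l, Icc (A l) (B l)))) ^ ((1:ℝ)/2) :=
          ENNReal.mul_rpow_of_nonneg _ _ (by norm_num)
  · -- Hᵐ bound
    rw [HmN, HmN]
    have hstep : ∑ k ∈ Finset.range (m+1),
        (eLpNorm (iteratedDeriv k ge) 2 (volume.restrict univ)) ^ 2
        ≤ C * ((m:ℝ≥0∞) + 1) * ∑ j ∈ Finset.range (m+1),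
          (eLpNorm (iteratedDeriv j g) 2 (volume.restrict (⋃ l, Icc (A l) (B l)))) ^ 2 := by
      have h1 : ∀ k ∈ Finset.range (m+1),
          (eLpNorm (iteratedDeriv k ge) 2 (volume.restrict univ)) ^ 2
          ≤ C * ∑ j ∈ Finset.range (m+1),
            (eLpNorm (iteratedDeriv j g) 2 (volume.restrict (⋃ l, Icc (A l) (B l)))) ^ 2 := by
        intro k hkmem
        have hk : k ≤ m := Nat.lt_succ_iff.1 (Finset.mem_range.1 hkmem)
        rw [Measure.restrict_univ, sq_eLpNorm_two]
        refine le_trans (hkey k hk) ?_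
        apply mul_le_mul_right
        calc ∑ j ∈ Finset.range (k+1),
              L2sq (iteratedDeriv j g) (volume.restrict (⋃ l, Icc (A l) (B l)))
            ≤ ∑ j ∈ Finset.range (m+1),
              L2sq (iteratedDeriv j g) (volume.restrict (⋃ l, Icc (A l) (B l))) :=
              Finset.sum_le_sum_of_subset (Finset.range_subset_range.2 (by omega))
          _ = _ := by
              refine Finset.sum_congr rfl fun j _ => ?_
              rw [sq_eLpNorm_two]
      calc ∑ k ∈ Finset.range (m+1),
            (eLpNorm (iteratedDeriv k ge) 2 (volume.restrict univ)) ^ 2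
          ≤ ∑ _k ∈ Finset.range (m+1), C * ∑ j ∈ Finset.range (m+1),
              (eLpNorm (iteratedDeriv j g) 2 (volume.restrict (⋃ l, Icc (A l) (B l)))) ^ 2 :=
            Finset.sum_le_sum h1
        _ = C * ((m:ℝ≥0∞) + 1) * ∑ j ∈ Finset.range (m+1),
              (eLpNorm (iteratedDeriv j g) 2 (volume.restrict (⋃ l, Icc (A l) (B l)))) ^ 2 := by
            rw [Finset.sum_const, Finset.card_range, nsmul_eq_mul]
            push_cast
            ring
    calc (∑ k ∈ Finset.range (m+1),
          (eLpNorm (iteratedDeriv k ge) 2 (volume.restrict univ)) ^ 2) ^ ((1:ℝ)/2)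
        ≤ (C * ((m:ℝ≥0∞) + 1) * ∑ j ∈ Finset.range (m+1),
            (eLpNorm (iteratedDeriv j g) 2
              (volume.restrict (⋃ l, Icc (A l) (B l)))) ^ 2) ^ ((1:ℝ)/2) :=
          ENNReal.rpow_le_rpow hstep (by norm_num)
      _ = (C * ((m:ℝ≥0∞) + 1)) ^ ((1:ℝ)/2) * (∑ j ∈ Finset.range (m+1),
            (eLpNorm (iteratedDeriv j g) 2
              (volume.restrict (⋃ l, Icc (A l) (B l)))) ^ 2) ^ ((1:ℝ)/2) :=
          ENNReal.mul_rpow_of_nonneg _ _ (by norm_num)
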